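/- Let R be an artinian local ring with finite residue field, and let 0 → M → N → L → 0 be a short exact sequence of R-modules equipped with an R-linear operator T acting equivariantly (i.e., commuting with the maps of the sequence). If T is locally finite on M and on L, then T is locally finite on N. -/
import Mathlib


/-- Let `0 → M → N → L → 0` be a short exact sequence of `R`-modules over an
artinian local ring `R` with finite residue field, with an `R`-linear operator `T`
acting equivariantly on `M`, `N`, `L`.  If `T` is locally finite on `M` and on `L`,
then `T` is locally finite on `N`. -/
theorem statement4 (R : Type*) [CommRing R] [IsArtinianRing R] [IsLocalRing R]
    [Finite (IsLocalRing.ResidueField R)]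
    (M N L : Type*) [AddCommGroup M] [Module R M] [AddCommGroup N] [Module R N]
    [AddCommGroup L] [Module R L]
    (i : M →ₗ[R] N) (s : N →ₗ[R] L)
    (hi : Function.Injective i) (hs : Function.Surjective s)
    (hexact : LinearMap.range i = LinearMap.ker s)
    (TM : Module.End R M) (TN : Module.End R N) (TL : Module.End R L)
    (hiT : i ∘ₗ TM = TN ∘ₗ i) (hsT : s ∘ₗ TN = TL ∘ₗ s)
    (hM : ∀ m : M, ∃ P : Submodule R M, P.FG ∧ P.map TM ≤ P ∧ m ∈ P)
    (hL : ∀ l : L, ∃ P : Submodule R L, P.FG ∧ P.map TL ≤ P ∧ l ∈ P) :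
    ∀ n : N, ∃ P : Submodule R N, P.FG ∧ P.map TN ≤ P ∧ n ∈ P := by
  intro n
  obtain ⟨PL, hPLfg, hPLst, hsnPL⟩ := hL (s n)
  obtain ⟨t, ht⟩ := hPLfg
  choose f hf using hs
  set Q : Submodule R N := Submodule.span R (f '' (t : Set L)) with hQ
  have hsQ : Q.map s = PL := by
    rw [hQ, Submodule.map_span, Set.image_image, ← ht]
    congr 1
    simp only [hf]
    exact Set.image_id _
  have hsT' : ∀ x : N, s (TN x) = TL (s x) := fun x => LinearMap.congr_fun hsT x
  have key : ∀ l : L, ∃ q : N, ∃ m0 : M, l ∈ t → (q ∈ Q ∧ TN (f l) = q + i m0) := by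
    intro l
    by_cases hl : l ∈ t
    · have hlPL : l ∈ PL := by rw [← ht]; exact Submodule.subset_span hl
      have hTLl : TL l ∈ PL := hPLst ⟨l, hlPL, rfl⟩
      rw [← hsQ] at hTLl
      obtain ⟨q, hqQ, hqs⟩ := hTLl
      have hker : TN (f l) - q ∈ LinearMap.ker s := by
        rw [LinearMap.mem_ker, map_sub, hsT', hf, hqs, sub_self]
      rw [← hexact] at hker
      obtain ⟨m0, hm0⟩ := hker
      exact ⟨q, m0, fun _ => ⟨hqQ, by rw [hm0]; abel⟩⟩
    · exact ⟨0, 0, fun h => absurd h hl⟩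
  choose q m hqm using key
  -- the element n itself
  have hnQ : ∃ q0 ∈ Q, ∃ m0 : M, n = q0 + i m0 := by
    rw [← hsQ] at hsnPL
    obtain ⟨q0, hq0Q, hq0s⟩ := hsnPL
    have hker : n - q0 ∈ LinearMap.ker s := by
      rw [LinearMap.mem_ker, map_sub, hq0s, sub_self]
    rw [← hexact] at hker
    obtain ⟨m0, hm0⟩ := hker
    exact ⟨q0, hq0Q, m0, by rw [hm0]; abel⟩
  obtain ⟨q0, hq0Q, m0, hn⟩ := hnQ
  choose g hgfg hgst hgm using fun l => hM (m l)
  obtain ⟨P0, hP0fg, hP0st, hm0P0⟩ := hM m0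
  set PM : Submodule R M := P0 ⊔ t.sup g with hPM
  have hPMfg : PM.FG := Submodule.FG.sup hP0fg (Submodule.fg_finset_sup t g fun l _ => hgfg l)
  have hPMst : PM.map TM ≤ PM := by
    rw [hPM, Submodule.map_sup]
    apply sup_le
    · exact le_trans hP0st le_sup_left
    · rw [Submodule.map_le_iff_le_comap]
      apply Finset.sup_le
      intro l hl
      rw [← Submodule.map_le_iff_le_comap]
      exact le_trans (le_trans (hgst l) (Finset.le_sup hl)) le_sup_right
  refine ⟨Q ⊔ PM.map i, ?_, ?_, ?_⟩
  · exact Submodule.FG.sup (Submodule.fg_span ((t.finite_toSet).image f)) (hPMfg.map i)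
  · rw [Submodule.map_sup]
    apply sup_le
    · rw [hQ, Submodule.map_span, Set.image_image, Submodule.span_le]
      rintro x ⟨l, hl, rfl⟩
      obtain ⟨hqQ, heq⟩ := hqm l hl
      show TN (f l) ∈ _
      rw [heq]
      have hmPM : m l ∈ PM := SetLike.le_def.mp le_sup_right
        (SetLike.le_def.mp (Finset.le_sup (f := g) hl) (hgm l))
      exact Submodule.add_mem _ (Submodule.mem_sup_left hqQ)
        (Submodule.mem_sup_right ⟨m l, hmPM, rfl⟩)
    · rw [← Submodule.map_comp, ← hiT, Submodule.map_comp]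
      exact le_trans (Submodule.map_mono hPMst) le_sup_right
  · rw [hn]
    exact Submodule.add_mem _ (Submodule.mem_sup_left hq0Q)
      (Submodule.mem_sup_right ⟨m0, SetLike.le_def.mp le_sup_left hm0P0, rfl⟩)
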